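/- If 𝒫 is a uniformly random k-path (i.e., the k shuffles are independent with each M_{a,b} chosen by picking a and b independently and uniformly from {1,…,n}), then θ_{i,j}𝒫 is also a uniformly random k-path. -/

import Mathlib

/-- One step of the `𝒫`-queue driven by the shuffle `M_{a,b}` with `ab = (a, b)`. -/
def queueStep {n : ℕ} (i j : Fin n) (Q : Finset (Fin n)) (ab : Fin n × Fin n) :
    Finset (Fin n) :=
  if ab.1 = j then {i}
  else if ab.1 = i then {j}
  else if ab.2 ∈ Q then insert ab.1 Q
  else Q.erase ab.1

/-- The `𝒫`-queue at time `t`, for the `k`-path `w` (the shuffle at time `t + 1` is `w t`);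
`Q 0 = ∅`. -/
def queueSeq {n : ℕ} (i j : Fin n) {k : ℕ} (w : Fin k → Fin n × Fin n) : ℕ → Finset (Fin n)
  | 0 => ∅
  | t + 1 => if h : t < k then queueStep i j (queueSeq i j w t) (w ⟨t, h⟩) else queueSeq i j w t

/-- The card moved at time `t ∈ {1, …, k}` by the `k`-path `w` (`none` if `t` is out of
range). -/
def cardMoved {n k : ℕ} (w : Fin k → Fin n × Fin n) (t : ℕ) : Option (Fin n) :=
  if h : 1 ≤ t ∧ t ≤ k then some (w ⟨t - 1, by omega⟩).1 else none

/-- The shuffle at time `t` is an `i`-or-`j` move. -/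
def isIJMove {n : ℕ} (i j : Fin n) {k : ℕ} (w : Fin k → Fin n × Fin n) (t : ℕ) : Prop :=
  cardMoved w t = some i ∨ cardMoved w t = some j

/-- `t` is a good time for the `k`-path `w`: it is an `i`-or-`j` move, and the next
`i`-or-`j` move `t'` (within `{1, …, k}`) has a singleton queue at time `t' - 1` and moves a
different card than the one moved at time `t`. -/
def isGoodTime {n : ℕ} (i j : Fin n) {k : ℕ} (w : Fin k → Fin n × Fin n) (t : ℕ) : Prop :=
  isIJMove i j w t ∧
    ∃ t', t < t' ∧ t' ≤ k ∧ isIJMove i j w t' ∧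
      (∀ s, t < s → s < t' → ¬ isIJMove i j w s) ∧
      (queueSeq i j w (t' - 1)).card = 1 ∧
      cardMoved w t' ≠ cardMoved w t

-- The last good time `T` of the `k`-path `w`, equal to `∞` if there are no good times.
open Classical in
noncomputable def lastGoodTime {n : ℕ} (i j : Fin n) {k : ℕ} (w : Fin k → Fin n × Fin n) :
    ℕ∞ :=
  if ∃ t, isGoodTime i j w t then (Nat.findGreatest (isGoodTime i j w) k : ℕ∞) else ⊤

-- `θ_{i,j}` : interchange the roles of `i` and `j` in every shuffle at a time strictly
-- before the last good time `T` (the shuffle at time `t + 1` is `w t`).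
open Classical in
noncomputable def theta {n : ℕ} (i j : Fin n) {k : ℕ} (w : Fin k → Fin n × Fin n) :
    Fin k → Fin n × Fin n :=
  fun s => if (((s : ℕ) + 1 : ℕ) : ℕ∞) < lastGoodTime i j w
    then (Equiv.swap i j (w s).1, Equiv.swap i j (w s).2)
    else w s

section Aux
variable {n k : ℕ} (i j : Fin n)

/-- swap both coordinates -/
def swPair (i j : Fin n) (ab : Fin n × Fin n) : Fin n × Fin n :=
  (Equiv.swap i j ab.1, Equiv.swap i j ab.2)

lemma queueStep_swap (hij : i ≠ j) (Q : Finset (Fin n)) (ab : Fin n × Fin n) :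
    queueStep i j (Q.image (Equiv.swap i j)) (swPair i j ab) =
      (queueStep i j Q ab).image (Equiv.swap i j) := by
  obtain ⟨a, b⟩ := ab
  by_cases haj : a = j
  · subst haj
    simp [queueStep, swPair, hij, Equiv.swap_apply_right]
  · by_cases hai : a = i
    · subst hai
      simp [queueStep, swPair, hij, Equiv.swap_apply_left, hij.symm]
    · have hsa : Equiv.swap i j a = a := Equiv.swap_apply_of_ne_of_ne hai haj
      have hmem : Equiv.swap i j b ∈ Q.image (Equiv.swap i j) ↔ b ∈ Q := by
        simp [Finset.mem_image, (Equiv.swap i j).injective.eq_iff]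
      simp only [queueStep, swPair, hsa, hai, haj, if_neg]
      by_cases hb : b ∈ Q
      · simp [hb, hmem, Finset.image_insert, hsa]
      · simp [hb, hmem, Finset.image_erase (Equiv.swap i j).injective, hsa]

lemma queueSeq_swap (hij : i ≠ j) (w : Fin k → Fin n × Fin n) (t : ℕ) :
    queueSeq i j (fun s => swPair i j (w s)) t =
      (queueSeq i j w t).image (Equiv.swap i j) := by
  induction t with
  | zero => simp [queueSeq]
  | succ t ih =>
    rw [queueSeq, queueSeq]
    split
    · rw [ih, queueStep_swap i j hij]
    · exact ih

lemma queueSeq_congr (w w' : Fin k → Fin n × Fin n) (t : ℕ)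
    (h : ∀ s : Fin k, (s : ℕ) < t → w s = w' s) :
    queueSeq i j w t = queueSeq i j w' t := by
  induction t with
  | zero => rfl
  | succ t ih =>
    rw [queueSeq, queueSeq]
    have ih' := ih (fun s hs => h s (by omega))
    split
    · rw [ih', h _ (by simpa using Nat.lt_succ_self t)]
    · exact ih'

lemma cardMoved_swap (w : Fin k → Fin n × Fin n) (t : ℕ) :
    cardMoved (fun s => swPair i j (w s)) t =
      Option.map (Equiv.swap i j) (cardMoved w t) := by
  unfold cardMoved
  split <;> simp [swPair]

end Aux

section Aux2
variable {n k : ℕ} (i j : Fin n)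

lemma isIJMove_swap (w : Fin k → Fin n × Fin n) (t : ℕ) :
    isIJMove i j (fun s => swPair i j (w s)) t ↔ isIJMove i j w t := by
  unfold isIJMove
  rw [cardMoved_swap]
  rcases cardMoved w t with _ | a
  · simp
  · simp only [Option.map_some, Option.some.injEq]
    constructor
    · rintro (h | h)
      · right
        have := congrArg (Equiv.swap i j) h
        simpa [Equiv.swap_apply_left] using this
      · left
        have := congrArg (Equiv.swap i j) h
        simpa [Equiv.swap_apply_right] using this
    · rintro (h | h)
      · right; rw [h, Equiv.swap_apply_left]
      · left; rw [h, Equiv.swap_apply_right]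

lemma isGoodTime_swap (hij : i ≠ j) (w : Fin k → Fin n × Fin n) (t : ℕ) :
    isGoodTime i j (fun s => swPair i j (w s)) t ↔ isGoodTime i j w t := by
  have hinj : Function.Injective (Option.map (Equiv.swap i j)) :=
    Option.map_injective (Equiv.swap i j).injective
  unfold isGoodTime
  rw [isIJMove_swap]
  refine and_congr Iff.rfl ?_
  apply exists_congr; intro t'
  rw [isIJMove_swap]
  refine and_congr Iff.rfl (and_congr Iff.rfl (and_congr Iff.rfl ?_))
  constructor
  · rintro ⟨h1, h2, h3⟩
    refine ⟨fun s hs hs' => by simpa [isIJMove_swap] using h1 s hs hs', ?_, ?_⟩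
    · rw [queueSeq_swap i j hij] at h2
      rwa [Finset.card_image_of_injective _ (Equiv.swap i j).injective] at h2
    · intro hc
      exact h3 (by rw [cardMoved_swap, cardMoved_swap, hc])
  · rintro ⟨h1, h2, h3⟩
    refine ⟨fun s hs hs' => by simpa [isIJMove_swap] using h1 s hs hs', ?_, ?_⟩
    · rw [queueSeq_swap i j hij,
        Finset.card_image_of_injective _ (Equiv.swap i j).injective]
      exact h2
    · rw [cardMoved_swap, cardMoved_swap]
      exact fun hc => h3 (hinj hc)

end Aux2
section Aux3
variable {n k : ℕ} (i j : Fin n)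

lemma cardMoved_eq {t : ℕ} (w : Fin k → Fin n × Fin n) (h1 : 1 ≤ t) (h2 : t ≤ k) :
    cardMoved w t = some (w ⟨t - 1, by omega⟩).1 := dif_pos ⟨h1, h2⟩

lemma isIJMove_bounds {w : Fin k → Fin n × Fin n} {t : ℕ} (h : isIJMove i j w t) :
    1 ≤ t ∧ t ≤ k := by
  by_contra hc
  rcases h with h | h <;> rw [cardMoved, dif_neg hc] at h <;> exact nomatch h

lemma goodTime_bounds {w : Fin k → Fin n × Fin n} {t : ℕ} (h : isGoodTime i j w t) :
    1 ≤ t ∧ t < k := by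
  obtain ⟨h0, t', h1, h2, -⟩ := h
  exact ⟨(isIJMove_bounds i j h0).1, by omega⟩

/-- two paths that agree (cards and queues) from time `T` on have the same good times `≥ T`. -/
lemma goodTime_of_agree {T : ℕ} (u v : Fin k → Fin n × Fin n)
    (hc : ∀ s, T ≤ s → cardMoved u s = cardMoved v s)
    (hq : ∀ s, T ≤ s → queueSeq i j u s = queueSeq i j v s)
    {t : ℕ} (ht : T ≤ t) (hg : isGoodTime i j u t) : isGoodTime i j v t := by
  have hiju : ∀ s, T ≤ s → (isIJMove i j u s ↔ isIJMove i j v s) := by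
    intro s hs; unfold isIJMove; rw [hc s hs]
  obtain ⟨h0, t', h1, h2, h3, h4, h5, h6⟩ := hg
  exact ⟨(hiju t ht).1 h0, t', h1, h2, (hiju t' (by omega)).1 h3,
    fun s hs hs' hv => h4 s hs hs' ((hiju s (by omega)).2 hv),
    by rw [← hq (t' - 1) (by omega)]; exact h5,
    by rw [← hc t' (by omega), ← hc t ht]; exact h6⟩

end Aux3
open Classical in
lemma theta_theta {n k : ℕ} (i j : Fin n) (hij : i ≠ j) (w : Fin k → Fin n × Fin n) :
    theta i j (theta i j w) = w := by
  by_cases hex : ∃ t, isGoodTime i j w t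
  · -- there is a good time; let T be the last one
    set T := Nat.findGreatest (isGoodTime i j w) k with hTdef
    obtain ⟨t0, ht0⟩ := hex
    have hT : isGoodTime i j w T :=
      Nat.findGreatest_spec (goodTime_bounds i j ht0).2.le ht0
    have hT1 : 1 ≤ T := (goodTime_bounds i j hT).1
    have hTk : T < k := (goodTime_bounds i j hT).2
    have hmax : ∀ t, T < t → ¬ isGoodTime i j w t := by
      intro t h hg
      have hb := goodTime_bounds i j hg
      exact Nat.findGreatest_is_greatest h hb.2.le hg
    have hlast : lastGoodTime i j w = (T : ℕ∞) := if_pos ⟨t0, ht0⟩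
    have htheta : ∀ s : Fin k,
        theta i j w s = if (s : ℕ) + 1 < T then swPair i j (w s) else w s := by
      intro s
      rw [theta, hlast]
      simp only [Nat.cast_lt]
      split <;> rfl
    -- the queue of `theta w` before `T` is the swapped queue of `w`
    have hA : ∀ t, t < T →
        queueSeq i j (theta i j w) t = (queueSeq i j w t).image (Equiv.swap i j) := by
      intro t ht
      rw [queueSeq_congr i j (theta i j w) (fun s => swPair i j (w s)) t
        (fun s hs => by rw [htheta s, if_pos (by omega)]),
        queueSeq_swap i j hij]
    -- the move at time `T` is an `i`-or-`j` move
    clear_value T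
    clear hTdef
    obtain ⟨m, rfl⟩ : ∃ m, T = m + 1 := ⟨T - 1, by omega⟩
    have hmk : m < k := by omega
    have hmove : (w ⟨m, hmk⟩).1 = i ∨ (w ⟨m, hmk⟩).1 = j := by
      rcases hT.1 with h | h <;>
        rw [cardMoved_eq w (by omega) (by omega)] at h <;>
        [left; right] <;> exact Option.some.inj h
    -- the queue of `theta w` from time `T` on equals that of `w`
    have hB : ∀ t, m + 1 ≤ t → queueSeq i j (theta i j w) t = queueSeq i j w t := by
      intro t ht
      induction t, ht using Nat.le_induction with
      | base =>
        rw [queueSeq, queueSeq, dif_pos hmk, dif_pos hmk,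
          htheta ⟨m, hmk⟩, if_neg (by simp)]
        rcases hmove with h | h <;> simp [queueStep, h, hij]
      | succ t ht ih =>
        rw [queueSeq, queueSeq]
        split
        · rw [ih, htheta ⟨t, by assumption⟩, if_neg (by simp; omega)]
        · exact ih
    -- the cards moved from time `T` on agree
    have hC : ∀ t, m + 1 ≤ t → cardMoved (theta i j w) t = cardMoved w t := by
      intro t ht
      unfold cardMoved
      split
      · next h => rw [htheta ⟨t - 1, by omega⟩, if_neg (by simp; omega)]
      · rfl
    -- good times from `T` on agree
    have hD : ∀ t, m + 1 ≤ t →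
        (isGoodTime i j (theta i j w) t ↔ isGoodTime i j w t) := by
      intro t ht
      exact ⟨goodTime_of_agree i j _ _ hC hB ht,
        goodTime_of_agree i j _ _ (fun s hs => (hC s hs).symm)
          (fun s hs => (hB s hs).symm) ht⟩
    have hE : isGoodTime i j (theta i j w) (m + 1) := (hD (m + 1) le_rfl).2 hT
    have hF : ∀ t, m + 1 < t → ¬ isGoodTime i j (theta i j w) t := by
      intro t h hg
      have hb := goodTime_bounds i j hg
      exact hmax t h ((hD t (by omega)).1 hg)
    have hlast2 : lastGoodTime i j (theta i j w) = ((m + 1 : ℕ) : ℕ∞) := by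
      rw [lastGoodTime, if_pos ⟨m + 1, hE⟩]
      congr 1
      exact Nat.findGreatest_eq_iff.mpr
        ⟨by omega, fun _ => hE, fun t h1 h2 => hF t h1⟩
    funext s
    rw [theta, hlast2]
    simp only [Nat.cast_lt]
    split
    · next h =>
      rw [htheta s, if_pos h]
      simp [swPair, Equiv.swap_apply_self]
    · next h =>
      rw [htheta s, if_neg h]
  · -- no good time : everything is swapped
    have hlast : lastGoodTime i j w = ⊤ := if_neg hex
    have hsw : theta i j w = fun s => swPair i j (w s) := by
      funext s
      rw [theta, hlast, if_pos (ENat.coe_lt_top _)]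
      rfl
    have hex' : ¬ ∃ t, isGoodTime i j (theta i j w) t := by
      rw [hsw]
      simpa only [isGoodTime_swap i j hij w] using hex
    have hlast' : lastGoodTime i j (theta i j w) = ⊤ := if_neg hex'
    funext s
    rw [theta, hlast', if_pos (ENat.coe_lt_top _), hsw]
    simp [swPair, Equiv.swap_apply_self]

/-- If `𝒫` is a uniformly random `k`-path, then so is `θ_{i,j} 𝒫`. -/
theorem theta_uniform {n k : ℕ} [Nonempty (Fin n)] (i j : Fin n) (hij : i ≠ j) :
    PMF.map (theta i j) (PMF.uniformOfFintype (Fin k → Fin n × Fin n)) =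
      PMF.uniformOfFintype (Fin k → Fin n × Fin n) := by
  have hinv : Function.Involutive (theta i j : (Fin k → Fin n × Fin n) → _) :=
    fun w => theta_theta i j hij w
  ext x
  rw [PMF.map_apply, tsum_eq_single (theta i j x) ?_]
  · rw [if_pos (hinv x).symm]
    simp [PMF.uniformOfFintype_apply]
  · intro b hb
    rw [if_neg]
    intro h
    exact hb (by rw [h, hinv])
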